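/- Let μ > 1 and t_j, p_j, t_k, p_k ≥ 0 with t_j + p_j ≤ t_k + p_k and min(t_j,p_j) > max(t_j,p_j)/μ (job j not imbalanced). Then in each of the four cases (2) t_j < t_k < p_j and D = t_j+p_j+t_k; (3) t_j < t_k < p_j, p_k < p_j and D = t_j+t_k+p_k; (4) t_k < t_j < p_k and D = t_j+p_j+t_k; (6) t_k < t_j, p_k < t_j and D = t_k+p_k; we have D ≤ ((2μ+1)/(μ+1))·(t_j + p_j). -/
import Mathlib


theorem not_imbalanced_delay_ratio
    (μ : ℝ) (hμ : 1 < μ)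
    (tj pj tk pk : ℝ) (htj : 0 ≤ tj) (hpj : 0 ≤ pj) (htk : 0 ≤ tk) (hpk : 0 ≤ pk)
    (hσ : tj + pj ≤ tk + pk)
    (hbal : min tj pj > max tj pj / μ) :
    (tj < tk → tk < pj → tj + pj + tk ≤ (2 * μ + 1) / (μ + 1) * (tj + pj)) ∧
    (tj < tk → tk < pj → pk < pj → tj + tk + pk ≤ (2 * μ + 1) / (μ + 1) * (tj + pj)) ∧
    (tk < tj → tj < pk → tj + pj + tk ≤ (2 * μ + 1) / (μ + 1) * (tj + pj)) ∧
    (tk < tj → pk < tj → tk + pk ≤ (2 * μ + 1) / (μ + 1) * (tj + pj)) := by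
  have hμ0 : (0:ℝ) < μ := lt_trans one_pos hμ
  have hμ1 : (0:ℝ) < μ + 1 := by linarith
  have hmin : max tj pj < μ * min tj pj := by
    rw [gt_iff_lt, div_lt_iff₀ hμ0] at hbal; linarith [hbal]
  have hsum : min tj pj + max tj pj = tj + pj := min_add_max tj pj
  have hmax : (μ + 1) * max tj pj ≤ μ * (tj + pj) := by nlinarith
  have htjm : tj ≤ max tj pj := le_max_left _ _
  have hpjm : pj ≤ max tj pj := le_max_right _ _
  refine ⟨?_, ?_, ?_, ?_⟩
  · intro h1 h2
    rw [div_mul_eq_mul_div, le_div_iff₀ hμ1]; nlinarith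
  · intro h1 h2 h3
    rw [div_mul_eq_mul_div, le_div_iff₀ hμ1]; nlinarith
  · intro h1 h2
    rw [div_mul_eq_mul_div, le_div_iff₀ hμ1]; nlinarith
  · intro h1 h2
    rw [div_mul_eq_mul_div, le_div_iff₀ hμ1]; nlinarith
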